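/- Let r and d be natural numbers with r ≥ 2 and d ≥ 2, let S be the free solvable group of rank r and derived length d, and let H be a subgroup of S generated by two elements (H = Subgroup.closure {g, f} for some g, f ∈ S). Then H is algebraically closed in S if and only if H is a retract of S. -/

import Mathlib

instance derivedSeriesNormal (G : Type*) [Group G] (n : ℕ) :
    (derivedSeries G n).Normal :=
  derivedSeries_normal G n

/-- A subgroup `H` of a group `G` is algebraically closed in `G`. -/
def IsAlgebraicallyClosed {G : Type*} [Group G] (H : Subgroup G) : Prop :=
  ∀ (n m : ℕ) (E : Fin m → Monoid.Coprod (FreeGroup (Fin n)) H),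
    (∃ ψ : Monoid.Coprod (FreeGroup (Fin n)) H →* G,
      ψ.comp Monoid.Coprod.inr = H.subtype ∧ ∀ i, ψ (E i) = 1) →
    ∃ ψ' : Monoid.Coprod (FreeGroup (Fin n)) H →* G,
      ψ'.comp Monoid.Coprod.inr = H.subtype ∧ (∀ i, ψ' (E i) = 1) ∧
      ψ'.range ≤ H

/-- A subgroup `H` of a group `G` is a retract of `G`. -/
def IsRetract {G : Type*} [Group G] (H : Subgroup G) : Prop :=
  ∃ φ : G →* G, (∀ x ∈ H, φ x = x) ∧ ∀ y, φ y ∈ H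

theorem two_generated_algebraically_closed_iff_retract_free_solvable
    (r d : ℕ) (hr : 2 ≤ r) (hd : 2 ≤ d)
    (g f : FreeGroup (Fin r) ⧸ derivedSeries (FreeGroup (Fin r)) d)
    (H : Subgroup (FreeGroup (Fin r) ⧸ derivedSeries (FreeGroup (Fin r)) d))
    (hH : H = Subgroup.closure {g, f}) :
    IsAlgebraicallyClosed H ↔ IsRetract H := by
  constructor
  · -- algebraically closed → retract
    intro hac
    have hg : g ∈ H := hH ▸ Subgroup.subset_closure (by simp)
    have hf : f ∈ H := hH ▸ Subgroup.subset_closure (by simp)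
    set π : FreeGroup (Fin r) →* FreeGroup (Fin r) ⧸ derivedSeries (FreeGroup (Fin r)) d :=
      QuotientGroup.mk' (derivedSeries (FreeGroup (Fin r)) d) with hπdef
    have hπ : Function.Surjective π := QuotientGroup.mk'_surjective _
    obtain ⟨wg, hwg⟩ := hπ g
    obtain ⟨wf, hwf⟩ := hπ f
    set E : Fin 2 → Monoid.Coprod (FreeGroup (Fin r)) H := ![
      Monoid.Coprod.inl wg * (Monoid.Coprod.inr (⟨g, hg⟩ : H))⁻¹,
      Monoid.Coprod.inl wf * (Monoid.Coprod.inr (⟨f, hf⟩ : H))⁻¹] with hEdef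
    have hex : ∃ ψ : Monoid.Coprod (FreeGroup (Fin r)) H →* FreeGroup (Fin r) ⧸ derivedSeries (FreeGroup (Fin r)) d, ψ.comp Monoid.Coprod.inr = H.subtype ∧ ∀ i, ψ (E i) = 1 := by
      refine ⟨Monoid.Coprod.lift π H.subtype, Monoid.Coprod.lift_comp_inr _ _, ?_⟩
      intro i
      fin_cases i <;>
        simp [hEdef, Monoid.Coprod.lift_apply_inl, Monoid.Coprod.lift_apply_inr, hwg, hwf]
    obtain ⟨ψ', h1, h2, h3⟩ := hac r 2 E hex
    set θ : FreeGroup (Fin r) →* FreeGroup (Fin r) ⧸ derivedSeries (FreeGroup (Fin r)) d :=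
      ψ'.comp Monoid.Coprod.inl with hθ
    have hSbot : derivedSeries (FreeGroup (Fin r) ⧸ derivedSeries (FreeGroup (Fin r)) d) d = ⊥ := by
      rw [← map_derivedSeries_eq hπ d, eq_bot_iff]
      rintro x ⟨y, hy, rfl⟩
      simpa [hπdef] using (QuotientGroup.eq_one_iff y).mpr hy
    have hkill : ∀ w ∈ derivedSeries (FreeGroup (Fin r)) d, θ w = 1 := by
      intro w hw
      have h0 : θ w ∈ (derivedSeries (FreeGroup (Fin r)) d).map θ := ⟨w, hw, rfl⟩
      have h1' := map_derivedSeries_le_derivedSeries θ d h0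
      rw [hSbot] at h1'
      simpa using h1'
    set φ := QuotientGroup.lift _ θ hkill with hφ
    have hφπ : ∀ w : FreeGroup (Fin r), φ (π w) = θ w := fun w => rfl
    have hrange : ∀ y, φ y ∈ H := by
      intro y
      obtain ⟨w, rfl⟩ := hπ y
      exact h3 ⟨Monoid.Coprod.inl w, rfl⟩
    have hinr : ∀ h : H, ψ' (Monoid.Coprod.inr h) = (h : FreeGroup (Fin r) ⧸ derivedSeries (FreeGroup (Fin r)) d) := fun h =>
      congrFun (congrArg (·.toFun) h1) h
    have hφg : φ g = g := by
      have h20 := h2 0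
      simp only [hEdef, Matrix.cons_val_zero, map_mul, map_inv, hinr] at h20
      have hq : ψ' (Monoid.Coprod.inl wg) = g := by
        rwa [mul_inv_eq_one] at h20
      rw [← hwg, hφπ, hθ, MonoidHom.comp_apply, hq]; exact hwg.symm
    have hφf : φ f = f := by
      have h21 := h2 1
      simp only [hEdef, Matrix.cons_val_one, Matrix.head_cons, Matrix.cons_val_zero, map_mul, map_inv, hinr] at h21
      have hq : ψ' (Monoid.Coprod.inl wf) = f := by
        rwa [mul_inv_eq_one] at h21
      rw [← hwf, hφπ, hθ, MonoidHom.comp_apply, hq]; exact hwf.symm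
    refine ⟨φ, ?_, hrange⟩
    intro x hx
    rw [hH] at hx
    induction hx using Subgroup.closure_induction with
    | mem x hx =>
      rcases hx with h | h <;> subst h
      · exact hφg
      · exact hφf
    | one => simp
    | mul a b _ _ ha hb => simp [map_mul, ha, hb]
    | inv a _ ha => simp [map_inv, ha]
  · -- retract → algebraically closed
    rintro ⟨φ, hfix, hrange⟩ n m E ⟨ψ, hψ1, hψ2⟩
    refine ⟨φ.comp ψ, ?_, fun i => by simp [hψ2 i], ?_⟩
    · ext h
      simp only [MonoidHom.comp_apply]
      rw [show ψ (Monoid.Coprod.inr h) = (h : _) from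
        congrFun (congrArg (·.toFun) hψ1) h]
      exact hfix _ h.2
    · rintro x ⟨y, rfl⟩
      exact hrange _
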